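/- Let ψ: [0, λ_max) → [0,∞) be CGF-like and three times differentiable with ψ''' ≥ 0 on (0, λ_max). For x in the image of ψ', let λ*(x) = (ψ')⁻¹(x) (the unique maximizer of λ ↦ λx − ψ(λ) over [0, λ_max)). Then for every a in the image of ψ' and every r ≥ 1 such that r·a is also in the image of ψ': λ*(r·a) ≤ r·λ*(a). -/

import Mathlib

open Real Set Filter

noncomputable section

/-- A CGF-like function on `D = [0, λ_max)`: strictly convex, twice continuously
differentiable, nonnegative, `ψ(0) = 0`, and `ψ'(0+) = 0`. -/
def CGFLike (D : Set ℝ) (ψ : ℝ → ℝ) : Prop :=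
  StrictConvexOn ℝ D ψ ∧ ContDiffOn ℝ 2 ψ D ∧ ψ 0 = 0 ∧
  Tendsto (derivWithin ψ D) (nhdsWithin 0 (Set.Ioi 0)) (nhds 0) ∧
  ∀ x ∈ D, 0 ≤ ψ x

/-- **Lemma (sublinearity of the argmax map `λ*`).**
Let `ψ : [0, λ_max) → [0,∞)` be CGF-like, three times differentiable with `ψ''' ≥ 0` on
`(0, λ_max)`. With `λ*(x) = (ψ')⁻¹(x)` (the unique maximizer of `λ ↦ λx − ψ(λ)`), for
every `a` in the image of `ψ'` and every `r ≥ 1` with `r·a` also in the image of `ψ'`: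
`λ*(r·a) ≤ r·λ*(a)`. -/
theorem lamStar_sublinear
    (lmax : EReal) (hlmax : 0 < lmax)
    (D : Set ℝ) (hD : D = {x : ℝ | 0 ≤ x ∧ (x : EReal) < lmax})
    (ψ : ℝ → ℝ) (hcgf : CGFLike D ψ)
    (hC3 : ContDiffOn ℝ 3 ψ D)
    (hd3 : ∀ x ∈ D, 0 < x → 0 ≤ iteratedDerivWithin 3 ψ D x)
    (a r : ℝ) (hr : 1 ≤ r)
    (ha : a ∈ derivWithin ψ D '' D) (hra : r * a ∈ derivWithin ψ D '' D) :
    Function.invFunOn (derivWithin ψ D) D (r * a) ≤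
      r * Function.invFunOn (derivWithin ψ D) D a := by
  obtain ⟨hsc, hC2, hψ0, hlim, hψpos⟩ := hcgf
  set g := derivWithin ψ D with hg
  have hr0 : (0:ℝ) < r := lt_of_lt_of_le one_pos hr
  -- membership facts about D
  have h0D : (0:ℝ) ∈ D := by
    rw [hD]; exact ⟨le_refl 0, by exact_mod_cast hlmax⟩
  have hsub : ∀ x ∈ D, ∀ y : ℝ, 0 ≤ y → y ≤ x → y ∈ D := by
    intro x hx y h0 hyx
    rw [hD] at hx ⊢
    exact ⟨h0, lt_of_le_of_lt (EReal.coe_le_coe_iff.2 hyx) hx.2⟩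
  have hord : D.OrdConnected := by
    constructor
    intro x hx z hz y hy
    have h0x : 0 ≤ x := by rw [hD] at hx; exact hx.1
    exact hsub z hz y (le_trans h0x hy.1) hy.2
  have hconvD : Convex ℝ D := convex_iff_ordConnected.2 hord
  -- nonempty interior
  obtain ⟨ε, hε0, hεl⟩ : ∃ x : ℝ, (0:EReal) < x ∧ (x:EReal) < lmax :=
    EReal.lt_iff_exists_real_btwn.1 hlmax
  have hε0' : (0:ℝ) < ε := by exact_mod_cast hε0
  have hIooD : Ioo (0:ℝ) ε ⊆ D := by
    intro y hy
    exact hsub ε (by rw [hD]; exact ⟨hε0'.le, hεl⟩) y hy.1.le hy.2.le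
  have hIooInt : Ioo (0:ℝ) ε ⊆ interior D := isOpen_Ioo.subset_interior_iff.2 hIooD
  have hUD : UniqueDiffOn ℝ D :=
    uniqueDiffOn_convex hconvD ⟨ε/2, hIooInt ⟨by linarith, by linarith⟩⟩
  -- interior points are positive
  have hintpos : ∀ x ∈ interior D, 0 < x := by
    intro x hx
    obtain ⟨l, u, hxlu, hsubD⟩ := mem_nhds_iff_exists_Ioo_subset.1 (mem_interior_iff_mem_nhds.1 hx)
    have hy : (l + x)/2 ∈ D := hsubD ⟨by linarith [hxlu.1], by linarith [hxlu.1, hxlu.2]⟩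
    have h0y : 0 ≤ (l + x)/2 := by rw [hD] at hy; exact hy.1
    linarith [hxlu.1]
  -- g is continuous on D
  have hgc : ContinuousOn g D := by
    have h1 : ContinuousOn (iteratedDerivWithin 1 ψ D) D :=
      hC2.continuousOn_iteratedDerivWithin (by norm_num) hUD
    exact h1.congr fun x hx => (congrFun iteratedDerivWithin_one x).symm
  -- g 0 = 0
  have hg0 : g 0 = 0 := by
    have h1 : Tendsto g (nhdsWithin 0 (Ioi 0)) (nhds (g 0)) := by
      have h2 : Tendsto g (nhdsWithin 0 D) (nhds (g 0)) := hgc 0 h0D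
      rw [← nhdsWithin_Ioo_eq_nhdsGT hε0']
      exact h2.mono_left (nhdsWithin_mono 0 hIooD)
    exact tendsto_nhds_unique h1 hlim
  -- g is strictly monotone on D
  have hgm : StrictMonoOn g D :=
    hsc.strictMonoOn_derivWithin (hC2.differentiableOn (by norm_num))
  -- the second derivative is monotone on D
  have hf2mono : MonotoneOn (iteratedDerivWithin 2 ψ D) D := by
    apply monotoneOn_of_deriv_nonneg hconvD
      (hC3.continuousOn_iteratedDerivWithin (by norm_num) hUD)
      ((hC3.differentiableOn_iteratedDerivWithin (by norm_num) hUD).mono interior_subset)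
    intro x hx
    have hxD : x ∈ D := interior_subset hx
    have h1 : deriv (iteratedDerivWithin 2 ψ D) x
        = derivWithin (iteratedDerivWithin 2 ψ D) D x :=
      (derivWithin_of_mem_nhds (mem_interior_iff_mem_nhds.1 hx)).symm
    have h2 : iteratedDerivWithin 3 ψ D x
        = derivWithin (iteratedDerivWithin 2 ψ D) D x :=
      congrFun iteratedDerivWithin_succ x
    rw [h1, ← h2]
    exact hd3 x hxD (hintpos x hx)
  -- g is convex on D
  have hgconv : ConvexOn ℝ D g := by
    have hEq : EqOn (iteratedDerivWithin 1 ψ D) g D := fun x hx =>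
      congrFun iteratedDerivWithin_one x
    apply MonotoneOn.convexOn_of_deriv hconvD hgc
    · exact (((hC3.differentiableOn_iteratedDerivWithin (n := 3) (m := 1) (by norm_num)
        hUD).mono interior_subset).congr (fun x hx => (hEq (interior_subset hx)).symm))
    · intro x hx y hy hxy
      have key : ∀ z ∈ interior D, deriv g z = iteratedDerivWithin 2 ψ D z := by
        intro z hz
        have hzD : z ∈ D := interior_subset hz
        have h1 : deriv g z = derivWithin g D z :=
          (derivWithin_of_mem_nhds (mem_interior_iff_mem_nhds.1 hz)).symm
        have h2 : iteratedDerivWithin 2 ψ D z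
            = derivWithin (iteratedDerivWithin 1 ψ D) D z :=
          congrFun iteratedDerivWithin_succ z
        rw [h1, h2]
        exact (derivWithin_congr hEq (hEq hzD)).symm
      rw [key x hx, key y hy]
      exact hf2mono (interior_subset hx) (interior_subset hy) hxy
  -- the two inverse points
  set la := Function.invFunOn g D a with hla_def
  set lra := Function.invFunOn g D (r * a) with hlra_def
  obtain ⟨xa, hxa, hgxa⟩ := ha
  obtain ⟨xra, hxra, hgxra⟩ := hra
  have hlaD : la ∈ D := Function.invFunOn_mem ⟨xa, hxa, hgxa⟩
  have hglaa : g la = a := Function.invFunOn_eq ⟨xa, hxa, hgxa⟩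
  have hlraD : lra ∈ D := Function.invFunOn_mem ⟨xra, hxra, hgxra⟩
  have hglra : g lra = r * a := Function.invFunOn_eq ⟨xra, hxra, hgxra⟩
  -- main argument
  by_contra hcon
  push_neg at hcon
  have h0la : 0 ≤ la := by rw [hD] at hlaD; exact hlaD.1
  have hrlaD : r * la ∈ D :=
    hsub lra hlraD (r * la) (by positivity) hcon.le
  -- convexity: r * a ≤ g (r * la)
  have hcomb : g ((1/r) • (r * la) + (1 - 1/r) • (0:ℝ))
      ≤ (1/r) * g (r * la) + (1 - 1/r) * g 0 :=
    hgconv.2 hrlaD h0D (by positivity) (by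
      have : 1/r ≤ 1 := by rw [div_le_one hr0]; exact hr
      linarith) (by ring)
  have harg : (1/r) • (r * la) + (1 - 1/r) • (0:ℝ) = la := by
    simp only [smul_eq_mul, mul_zero, add_zero]
    field_simp
  rw [harg, hg0, hglaa, mul_zero, add_zero] at hcomb
  have hkey : r * a ≤ g (r * la) := by
    have := mul_le_mul_of_nonneg_left hcomb hr0.le
    calc r * a ≤ r * ((1/r) * g (r * la)) := this
    _ = g (r * la) := by field_simp
  have hlt : g (r * la) < g lra := hgm hrlaD hlraD hcon
  rw [hglra] at hlt
  linarith

end
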